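/- Let r be a positive integer, F a field, F ⊆ 2^[n] a set family, and V the F-span of the characteristic vectors of F. Suppose V^⟨r⟩ = C₁ ⊕ ⋯ ⊕ C_m where the C_i are nonzero subspaces with pairwise disjoint supports. If dim C_i = 1, then supp(C_i) is an atom of F. -/

import Mathlib

open Submodule

/-- The (Schur / coordinatewise) product of two subspaces of `Fin n → K`. -/
def schurMul {K : Type*} [CommRing K] {n : ℕ} (C D : Submodule K (Fin n → K)) :
    Submodule K (Fin n → K) :=
  Submodule.span K {x | ∃ c ∈ C, ∃ d ∈ D, x = c * d}

/-- `schurPow C k` is the `(k+1)`-st Schur power `C^⟨k+1⟩`; so `schurPow C 0 = C^⟨1⟩ = C`. -/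
def schurPow {K : Type*} [CommRing K] {n : ℕ} (C : Submodule K (Fin n → K)) :
    ℕ → Submodule K (Fin n → K)
  | 0 => C
  | k + 1 => schurMul (schurPow C k) C

/-- The stabiliser `St(E) = {x : x * E ⊆ E}` of a subspace, itself a subspace. -/
def stab {K : Type*} [CommRing K] {n : ℕ} (E : Submodule K (Fin n → K)) :
    Submodule K (Fin n → K) where
  carrier := {x | ∀ e ∈ E, x * e ∈ E}
  add_mem' := fun {a b} ha hb e he => by simpa [add_mul] using E.add_mem (ha e he) (hb e he)
  zero_mem' := fun e he => by simp
  smul_mem' := fun c {x} hx e he => by simpa [smul_mul_assoc] using E.smul_mem c (hx e he)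

/-- Support of a subspace of `Fin n → K`. -/
def suppS {K : Type*} [CommRing K] {n : ℕ} (C : Submodule K (Fin n → K)) : Set (Fin n) :=
  {i | ∃ v ∈ C, v i ≠ 0}

/-- Characteristic vector of a finite set. -/
def charVec (R : Type*) [Zero R] [One R] {n : ℕ} (A : Finset (Fin n)) : Fin n → R :=
  fun i => if i ∈ A then 1 else 0

/-- `𝓕` is `k`-wise `ℓ`-divisible: every intersection of `k` (not necessarily distinct)
members of `𝓕` has cardinality divisible by `ℓ`. -/
def kWiseDiv (n k ℓ : ℕ) (𝓕 : Finset (Finset (Fin n))) : Prop :=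
  ∀ A : Fin k → Finset (Fin n), (∀ i, A i ∈ 𝓕) → ℓ ∣ (Finset.univ.inf A).card

/-- Support of a set family. -/
def famSupp {n : ℕ} (ℱ : Set (Finset (Fin n))) : Set (Fin n) :=
  ⋃ B ∈ ℱ, (B : Set (Fin n))

/-- `A` is an atom of the family `ℱ`: a nonempty subset of the support such that every
member of `ℱ` contains `A` or is disjoint from it, maximal with this property. -/
def IsAtomOf {n : ℕ} (ℱ : Set (Finset (Fin n))) (A : Finset (Fin n)) : Prop :=
  A.Nonempty ∧ (A : Set (Fin n)) ⊆ famSupp ℱ ∧ (∀ B ∈ ℱ, A ⊆ B ∨ Disjoint A B) ∧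
    ∀ A' : Finset (Fin n), A ⊆ A' → (A' : Set (Fin n)) ⊆ famSupp ℱ →
      (∀ B ∈ ℱ, A' ⊆ B ∨ Disjoint A' B) → A' = A

/-- The family `ℱ^r` of all `r`-fold intersections of members of `ℱ`. -/
def interFam {n : ℕ} (ℱ : Set (Finset (Fin n))) (r : ℕ) : Set (Finset (Fin n)) :=
  {S | ∃ f : Fin r → Finset (Fin n), (∀ i, f i ∈ ℱ) ∧ S = Finset.univ.inf f}

/-- The linear map sending `v` to its restriction (indicator) on a coordinate set `S`. -/
noncomputable def indicatorMapL {K : Type*} [CommRing K] {n : ℕ} (S : Set (Fin n)) :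
    (Fin n → K) →ₗ[K] (Fin n → K) where
  toFun v := S.indicator v
  map_add' a b := by
    funext i; by_cases h : i ∈ S <;> simp [Set.indicator_apply, h]
  map_smul' c a := by
    funext i; by_cases h : i ∈ S <;> simp [Set.indicator_apply, h]

/-- Restriction (projection) of a subspace `V` to the coordinates in `S`. -/
noncomputable def restrTo {K : Type*} [CommRing K] {n : ℕ} (S : Set (Fin n))
    (V : Submodule K (Fin n → K)) : Submodule K (Fin n → K) :=
  V.map (indicatorMapL S)


section aux
variable {K : Type*} [Field K] {n : ℕ}

lemma schurMul_le' {E A B : Submodule K (Fin n → K)}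
    (hE : ∀ x ∈ E, ∀ y ∈ E, x * y ∈ E) (hA : A ≤ E) (hB : B ≤ E) :
    schurMul A B ≤ E := by
  rw [schurMul, Submodule.span_le]
  rintro x ⟨c, hc, d, hd, rfl⟩
  exact hE c (hA hc) d (hB hd)

lemma schurPow_le' {E V : Submodule K (Fin n → K)}
    (hE : ∀ x ∈ E, ∀ y ∈ E, x * y ∈ E) (hV : V ≤ E) (k : ℕ) :
    schurPow V k ≤ E := by
  induction k with
  | zero => exact hV
  | succ k ih => exact schurMul_le' hE ih hV

lemma charVec_mul_self (B : Finset (Fin n)) :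
    charVec K B * charVec K B = charVec K B := by
  funext j
  simp only [charVec, Pi.mul_apply]
  split <;> simp

lemma charVec_mem_schurPow {ℱ : Set (Finset (Fin n))} {B : Finset (Fin n)} (hB : B ∈ ℱ) (k : ℕ) :
    charVec K B ∈ schurPow (Submodule.span K (charVec K '' ℱ)) k := by
  induction k with
  | zero => exact Submodule.subset_span ⟨B, hB, rfl⟩
  | succ k ih =>
      show charVec K B ∈ schurMul _ _
      have h := Submodule.subset_span (R := K)
        (s := {x | ∃ c ∈ schurPow (Submodule.span K (charVec K '' ℱ)) k,
          ∃ d ∈ Submodule.span K (charVec K '' ℱ), x = c * d})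
        (show charVec K B * charVec K B ∈ _ from
          ⟨_, ih, _, Submodule.subset_span ⟨B, hB, rfl⟩, rfl⟩)
      rwa [charVec_mul_self] at h

/-- Vectors vanishing on a coordinate set. -/
def vanishOn (K : Type*) [Field K] {n : ℕ} (S : Set (Fin n)) : Submodule K (Fin n → K) where
  carrier := {x | ∀ j ∈ S, x j = 0}
  add_mem' := fun {a b} ha hb j hj => by simp [ha j hj, hb j hj]
  zero_mem' := fun j _ => rfl
  smul_mem' := fun c {x} hx j hj => by simp [hx j hj]

lemma mem_vanishOn {S : Set (Fin n)} {x : Fin n → K} :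
    x ∈ vanishOn K S ↔ ∀ j ∈ S, x j = 0 := Iff.rfl

/-- Vectors with equal `a` and `b` coordinates. -/
def coordEq (K : Type*) [Field K] {n : ℕ} (a b : Fin n) : Submodule K (Fin n → K) where
  carrier := {x | x a = x b}
  add_mem' := fun {u v} hu hv => by simp only [Set.mem_setOf_eq, Pi.add_apply] at *; rw [hu, hv]
  zero_mem' := rfl
  smul_mem' := fun c {x} hx => by simp only [Set.mem_setOf_eq, Pi.smul_apply] at *; rw [hx]

lemma mem_coordEq {a b : Fin n} {x : Fin n → K} : x ∈ coordEq K a b ↔ x a = x b := Iff.rfl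

lemma indicator_mem_of_disjoint {m : ℕ} (C : Fin m → Submodule K (Fin n → K))
    (hdisj : ∀ i j, i ≠ j → Disjoint (suppS (C i)) (suppS (C j))) (i : Fin m)
    {x : Fin n → K} (hx : x ∈ ⨆ j, C j) : (suppS (C i)).indicator x ∈ C i := by
  refine Submodule.iSup_induction (motive := fun x => (suppS (C i)).indicator x ∈ C i) C hx ?_ ?_ ?_
  · intro j x hxj
    by_cases hji : j = i
    · subst hji
      have : (suppS (C j)).indicator x = x := by
        funext t
        by_cases ht : t ∈ suppS (C j)
        · simp [Set.indicator_apply, ht]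
        · have hx0 : x t = 0 := by
            by_contra h
            exact ht ⟨x, hxj, h⟩
          simp [Set.indicator_apply, ht, hx0]
      rwa [this]
    · have : (suppS (C i)).indicator x = 0 := by
        funext t
        by_cases ht : t ∈ suppS (C i)
        · have htj : t ∉ suppS (C j) :=
            Set.disjoint_left.mp (hdisj i j (fun h => hji h.symm)) ht
          have hx0 : x t = 0 := by
            by_contra h
            exact htj ⟨x, hxj, h⟩
          simp [Set.indicator_apply, ht, hx0]
        · simp [Set.indicator_apply, ht]
      rw [this]; exact (C i).zero_mem
  · simpa using (C i).zero_mem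
  · intro a b ha hb
    have : (suppS (C i)).indicator (a + b)
        = (suppS (C i)).indicator a + (suppS (C i)).indicator b := by
      funext t; by_cases ht : t ∈ suppS (C i) <;> simp [Set.indicator_apply, ht]
    rw [this]; exact (C i).add_mem ha hb

end aux

/-- in a decomposition `V^⟨r⟩ = C₁ ⊕ ⋯ ⊕ C_m` into nonzero subspaces with
pairwise disjoint supports, the support of any one-dimensional summand is an atom of `ℱ`.
(Recall `schurPow V (r-1) = V^⟨r⟩`.) -/
theorem statement15 (K : Type*) [Field K] (n r : ℕ) (hr : 0 < r)
    (ℱ : Set (Finset (Fin n)))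
    (V : Submodule K (Fin n → K))
    (hV : V = Submodule.span K (charVec K '' ℱ))
    (m : ℕ) (C : Fin m → Submodule K (Fin n → K))
    (hne : ∀ i, C i ≠ ⊥)
    (hdisj : ∀ i j, i ≠ j → Disjoint (suppS (C i)) (suppS (C j)))
    (hdec : schurPow V (r - 1) = ⨆ i, C i)
    (i : Fin m) (hdim : Module.finrank K ↥(C i) = 1) :
    ∃ A : Finset (Fin n), (A : Set (Fin n)) = suppS (C i) ∧ IsAtomOf ℱ A := by
  classical
  obtain ⟨v, hv0, hall⟩ := finrank_eq_one_iff'.mp hdim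
  set v₀ : Fin n → K := (v : Fin n → K) with hv₀def
  have hv₀mem : v₀ ∈ C i := v.2
  have hv₀ne : v₀ ≠ 0 := fun h => hv0 (Subtype.ext h)
  have hmul : ∀ w ∈ C i, ∃ c : K, w = c • v₀ := by
    intro w hw
    obtain ⟨c, hc⟩ := hall ⟨w, hw⟩
    exact ⟨c, by simpa using (congrArg Subtype.val hc).symm⟩
  set A : Finset (Fin n) := Finset.univ.filter (fun j => v₀ j ≠ 0) with hAdef
  have hmemA : ∀ j, j ∈ A ↔ v₀ j ≠ 0 := by intro j; simp [hAdef]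
  have hA_supp : (A : Set (Fin n)) = suppS (C i) := by
    ext j
    simp only [Finset.mem_coe, hmemA, suppS, Set.mem_setOf_eq]
    constructor
    · intro h; exact ⟨v₀, hv₀mem, h⟩
    · rintro ⟨w, hw, hwj⟩
      obtain ⟨c, rfl⟩ := hmul w hw
      intro h0
      apply hwj
      simp [Pi.smul_apply, h0]
  -- v₀ is in the Schur power
  have hv₀W : v₀ ∈ schurPow V (r - 1) := by
    rw [hdec]
    exact Submodule.mem_iSup_of_mem i hv₀mem
  -- the Schur power vanishes outside famSupp ℱ
  have hWE₀ : schurPow V (r - 1) ≤ vanishOn K (famSupp ℱ)ᶜ := by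
    apply schurPow_le'
    · intro x hx y hy j hj
      have := hx j hj
      simp [Pi.mul_apply, this]
    · rw [hV, Submodule.span_le]
      rintro x ⟨B, hB, rfl⟩
      intro j hj
      have hjB : j ∉ B := by
        intro hmem
        exact hj (Set.mem_biUnion hB hmem)
      simp [charVec, hjB]
  -- dichotomy
  have dich : ∀ B ∈ ℱ, A ⊆ B ∨ Disjoint A B := by
    intro B hB
    have hχ : charVec K B ∈ ⨆ j, C j := by
      rw [← hdec, hV]
      exact charVec_mem_schurPow hB _
    have hc : (suppS (C i)).indicator (charVec K B) ∈ C i :=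
      indicator_mem_of_disjoint C hdisj i hχ
    obtain ⟨lam, hlam⟩ := hmul _ hc
    by_cases hl : lam = 0
    · right
      rw [Finset.disjoint_left]
      intro a haA haB
      have haS : a ∈ suppS (C i) := by rw [← hA_supp]; exact haA
      have : (suppS (C i)).indicator (charVec K B) a = charVec K B a := by
        simp [Set.indicator_apply, haS]
      rw [hlam, hl] at this
      simp [charVec, haB] at this
    · left
      intro a haA
      have haS : a ∈ suppS (C i) := by rw [← hA_supp]; exact haA
      have hva : v₀ a ≠ 0 := (hmemA a).mp haA
      have h1 : (suppS (C i)).indicator (charVec K B) a = charVec K B a := by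
        simp [Set.indicator_apply, haS]
      rw [hlam] at h1
      have : charVec K B a ≠ 0 := by
        rw [← h1]
        simp [Pi.smul_apply]
        exact ⟨hl, hva⟩
      by_contra haB
      simp [charVec, haB] at this
  refine ⟨A, hA_supp, ?_, ?_, dich, ?_⟩
  · -- nonempty
    obtain ⟨j, hj⟩ := Function.ne_iff.mp hv₀ne
    exact ⟨j, (hmemA j).mpr (by simpa using hj)⟩
  · -- A ⊆ famSupp
    intro j hj
    by_contra hjf
    have := hWE₀ hv₀W j hjf
    exact (hmemA j).mp hj this
  · -- maximality
    intro A' hAA' hA'supp hdich'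
    refine Finset.Subset.antisymm ?_ hAA'
    intro j hj
    by_contra hjA
    obtain ⟨a, ha⟩ : A.Nonempty := by
      obtain ⟨t, ht⟩ := Function.ne_iff.mp hv₀ne
      exact ⟨t, (hmemA t).mpr (by simpa using ht)⟩
    have key : ∀ B ∈ ℱ, (a ∈ B ↔ j ∈ B) := by
      intro B hB
      constructor
      · intro haB
        have hAB : A ⊆ B := (dich B hB).resolve_right
          (fun hd => Finset.disjoint_left.mp hd ha haB)
        have hA'B : A' ⊆ B := (hdich' B hB).resolve_right
          (fun hd => Finset.disjoint_left.mp hd (hAA' ha) (hAB ha))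
        exact hA'B hj
      · intro hjB
        have hA'B : A' ⊆ B := (hdich' B hB).resolve_right
          (fun hd => Finset.disjoint_left.mp hd hj hjB)
        exact hA'B (hAA' ha)
    have hWE : schurPow V (r - 1) ≤ coordEq K a j := by
      apply schurPow_le'
      · intro x hx y hy
        rw [mem_coordEq] at *
        simp only [Pi.mul_apply]
        rw [hx, hy]
      · rw [hV, Submodule.span_le]
        rintro x ⟨B, hB, rfl⟩
        rw [SetLike.mem_coe, mem_coordEq]
        simp only [charVec]
        exact if_congr (key B hB) rfl rfl
    have heq : v₀ a = v₀ j := hWE hv₀W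
    have hva : v₀ a ≠ 0 := (hmemA a).mp ha
    have hvj : v₀ j = 0 := by
      by_contra h
      exact hjA ((hmemA j).mpr h)
    rw [hvj] at heq
    exact hva heq
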